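/- For every t>0, ∫_t^∞ ( (s−t)^{−1/2} − s^{−1/2} ) · ((1+√s)/√s) ds = ∫₀^∞ ( u^{−1/2} − (u+1)^{−1/2} ) · ( (u+1)^{−1/2} + √t ) du, and this integral is finite; moreover there is a constant C>0 with ∫_t^∞ ((s−t)^{−1/2} − s^{−1/2})((1+√s)/√s) ds ≤ C(1+√t) for all t>0. -/

import Mathlib

open MeasureTheory Real Set

lemma cov (t : ℝ) (ht : 0 < t) :
    (∫⁻ s in Set.Ioi t,
        ENNReal.ofReal ((1 / Real.sqrt (s - t) - 1 / Real.sqrt s) *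
          ((1 + Real.sqrt s) / Real.sqrt s))) =
      (∫⁻ u in Set.Ioi (0 : ℝ),
        ENNReal.ofReal ((1 / Real.sqrt u - 1 / Real.sqrt (u + 1)) *
          (1 / Real.sqrt (u + 1) + Real.sqrt t))) := by
  set F : ℝ → ℝ := fun s => (1 / Real.sqrt (s - t) - 1 / Real.sqrt s) *
      ((1 + Real.sqrt s) / Real.sqrt s) with hF
  set e : ℝ → ℝ := fun u => t + t * u with he
  have hmap : Measure.map e volume = ENNReal.ofReal |t⁻¹| • volume := by
    have h0 : e = (fun s => t + s) ∘ (fun u => t * u) := rfl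
    rw [h0, ← Measure.map_map (measurable_const_add t) (measurable_const_mul t),
      Real.map_volume_mul_left ht.ne', Measure.map_smul,
      Measure.IsAddLeftInvariant.map_add_left_eq_self t]
  have hpre : e ⁻¹' (Set.Ioi t) = Set.Ioi (0 : ℝ) := by
    ext u
    simp only [Set.mem_preimage, Set.mem_Ioi, he]
    constructor
    · intro h; nlinarith
    · intro h; nlinarith
  have hpt : ∀ u ∈ Set.Ioi (0 : ℝ),
      ENNReal.ofReal ((1 / Real.sqrt u - 1 / Real.sqrt (u + 1)) *
        (1 / Real.sqrt (u + 1) + Real.sqrt t)) = ENNReal.ofReal (t * F (e u)) := by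
    intro u hu
    have hu' : (0:ℝ) < u := hu
    have hsu : Real.sqrt (t * u) = Real.sqrt t * Real.sqrt u := Real.sqrt_mul ht.le u
    have hsu1 : Real.sqrt (t * (u + 1)) = Real.sqrt t * Real.sqrt (u + 1) :=
      Real.sqrt_mul ht.le _
    have hat : (0:ℝ) < Real.sqrt t := Real.sqrt_pos.2 ht
    have hbu : (0:ℝ) < Real.sqrt u := Real.sqrt_pos.2 hu'
    have hcu : (0:ℝ) < Real.sqrt (u + 1) := Real.sqrt_pos.2 (by linarith)
    have hts : Real.sqrt t * Real.sqrt t = t := Real.mul_self_sqrt ht.le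
    congr 1
    simp only [hF, he]
    have h1 : t + t * u - t = t * u := by ring
    have h2 : t + t * u = t * (u + 1) := by ring
    rw [h1, h2, hsu, hsu1]
    set a := Real.sqrt t with hA
    set b := Real.sqrt u with hB
    set c := Real.sqrt (u + 1) with hC
    rw [← hts]
    field_simp
  rw [setLIntegral_congr_fun measurableSet_Ioi hpt]
  have hmeas : Measurable e := (measurable_const_mul t).const_add t
  have hemb : MeasurableEmbedding e := by
    refine hmeas.measurableEmbedding ?_
    intro x y hxy
    simp only [he] at hxy
    exact mul_left_cancel₀ ht.ne' (by linarith : t * x = t * y)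
  calc (∫⁻ s in Set.Ioi t, ENNReal.ofReal (F s))
      = ENNReal.ofReal t * (ENNReal.ofReal t⁻¹ *
          ∫⁻ s in Set.Ioi t, ENNReal.ofReal (F s)) := by
        rw [← mul_assoc, ← ENNReal.ofReal_mul ht.le, mul_inv_cancel₀ ht.ne',
          ENNReal.ofReal_one, one_mul]
    _ = ENNReal.ofReal t * ∫⁻ s, ENNReal.ofReal (F s)
          ∂((ENNReal.ofReal |t⁻¹| • volume).restrict (Set.Ioi t)) := by
        rw [Measure.restrict_smul, lintegral_smul_measure, abs_of_pos (inv_pos.2 ht), smul_eq_mul]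
    _ = ENNReal.ofReal t * ∫⁻ s, ENNReal.ofReal (F s)
          ∂(Measure.map e (volume.restrict (Set.Ioi 0))) := by
        rw [← hmap, Measure.restrict_map hmeas measurableSet_Ioi, hpre]
    _ = ENNReal.ofReal t * ∫⁻ u in Set.Ioi (0:ℝ), ENNReal.ofReal (F (e u)) := by
        rw [hemb.lintegral_map]
    _ = ∫⁻ u in Set.Ioi (0:ℝ), ENNReal.ofReal (t * F (e u)) := by
        rw [← lintegral_const_mul' _ _ ENNReal.ofReal_ne_top]
        congr 1
        ext u
        rw [ENNReal.ofReal_mul ht.le]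

lemma ptA (t u : ℝ) (ht : 0 < t) (hu : u ∈ Set.Ioc (0:ℝ) 1) :
    (1 / Real.sqrt u - 1 / Real.sqrt (u + 1)) * (1 / Real.sqrt (u + 1) + Real.sqrt t)
      ≤ (1 + Real.sqrt t) * u ^ (-(1/2) : ℝ) := by
  obtain ⟨hu0, hu1⟩ := hu
  have hb : (0:ℝ) < Real.sqrt u := Real.sqrt_pos.2 hu0
  have hc : (0:ℝ) < Real.sqrt (u + 1) := Real.sqrt_pos.2 (by linarith)
  have hc1 : (1:ℝ) ≤ Real.sqrt (u + 1) := by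
    have h := Real.sqrt_le_sqrt (show (1:ℝ) ≤ u + 1 by linarith)
    rwa [Real.sqrt_one] at h
  have hrw : u ^ (-(1/2) : ℝ) = 1 / Real.sqrt u := by
    rw [Real.rpow_neg hu0.le, Real.sqrt_eq_rpow]
    norm_num
  rw [hrw]
  have f1 : 1 / Real.sqrt u - 1 / Real.sqrt (u + 1) ≤ 1 / Real.sqrt u :=
    sub_le_self _ (by positivity)
  have f2 : 1 / Real.sqrt (u + 1) + Real.sqrt t ≤ 1 + Real.sqrt t := by
    have : 1 / Real.sqrt (u + 1) ≤ 1 := by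
      rw [div_le_one hc]; exact hc1
    linarith
  have f1nn : 0 ≤ 1 / Real.sqrt u - 1 / Real.sqrt (u + 1) := by
    have : 1 / Real.sqrt (u + 1) ≤ 1 / Real.sqrt u :=
      one_div_le_one_div_of_le hb (Real.sqrt_le_sqrt (by linarith))
    linarith
  calc (1 / Real.sqrt u - 1 / Real.sqrt (u + 1)) * (1 / Real.sqrt (u + 1) + Real.sqrt t)
      ≤ (1 / Real.sqrt u) * (1 + Real.sqrt t) :=
        mul_le_mul f1 f2 (by positivity) (by positivity)
    _ = (1 + Real.sqrt t) * (1 / Real.sqrt u) := by ring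

lemma ptB (t u : ℝ) (ht : 0 < t) (hu : u ∈ Set.Ioi (1:ℝ)) :
    (1 / Real.sqrt u - 1 / Real.sqrt (u + 1)) * (1 / Real.sqrt (u + 1) + Real.sqrt t)
      ≤ ((1 + Real.sqrt t) / 2) * u ^ (-(3/2) : ℝ) := by
  have hu1 : (1:ℝ) < u := hu
  have hu0 : (0:ℝ) < u := by linarith
  set b := Real.sqrt u with hB
  set c := Real.sqrt (u + 1) with hC
  have hb : (0:ℝ) < b := Real.sqrt_pos.2 hu0
  have hc : (0:ℝ) < c := Real.sqrt_pos.2 (by linarith)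
  have hb1 : (1:ℝ) ≤ b := by
    have h := Real.sqrt_le_sqrt hu1.le
    rwa [Real.sqrt_one] at h
  have hbc : b ≤ c := Real.sqrt_le_sqrt (by linarith)
  have hbb : b * b = u := Real.mul_self_sqrt hu0.le
  have hcc : c * c = u + 1 := Real.mul_self_sqrt (by linarith)
  have hrw : u ^ (-(3/2) : ℝ) = 1 / (u * b) := by
    rw [Real.rpow_neg hu0.le, show ((3:ℝ)/2) = 1 + 1/2 by norm_num,
      Real.rpow_add hu0, Real.rpow_one, hB, Real.sqrt_eq_rpow]
    norm_num
  rw [hrw]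
  have key : 1 / b - 1 / c ≤ 1 / 2 * (1 / (u * b)) := by
    have hd : 1 / b - 1 / c = (c - b) / (b * c) := by field_simp
    rw [hd, show (1:ℝ) / 2 * (1 / (u * b)) = 1 / (2 * (u * b)) by ring,
      div_le_div_iff₀ (by positivity) (by positivity)]
    have hcb : (c - b) * (c + b) = 1 := by nlinarith [hbb, hcc]
    nlinarith [hcb, hb1, hbc, mul_pos hb hc, sq_nonneg (c - b), sq_nonneg (c + b),
      mul_le_mul_of_nonneg_left hbc (le_of_lt hb)]
  have f2 : 1 / c + Real.sqrt t ≤ 1 + Real.sqrt t := by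
    have h1c : 1 / c ≤ 1 := by
      rw [div_le_one hc]
      calc (1:ℝ) ≤ b := hb1
        _ ≤ c := hbc
    linarith
  have f1nn : 0 ≤ 1 / b - 1 / c := by
    have : 1 / c ≤ 1 / b := one_div_le_one_div_of_le hb hbc
    linarith
  calc (1 / b - 1 / c) * (1 / c + Real.sqrt t)
      ≤ (1 / 2 * (1 / (u * b))) * (1 + Real.sqrt t) :=
        mul_le_mul key f2 (by positivity) (by positivity)
    _ = (1 + Real.sqrt t) / 2 * (1 / (u * b)) := by ring

lemma boundK (t : ℝ) (ht : 0 < t) :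
    (∫⁻ u in Set.Ioi (0 : ℝ),
        ENNReal.ofReal ((1 / Real.sqrt u - 1 / Real.sqrt (u + 1)) *
          (1 / Real.sqrt (u + 1) + Real.sqrt t)))
      ≤ ENNReal.ofReal (3 * (1 + Real.sqrt t)) := by
  have hsplit : Set.Ioi (0:ℝ) = Set.Ioc 0 1 ∪ Set.Ioi 1 :=
    (Set.Ioc_union_Ioi_eq_Ioi zero_le_one).symm
  rw [hsplit, lintegral_union measurableSet_Ioi (Set.Ioc_disjoint_Ioi le_rfl)]
  have hA : (∫⁻ u in Set.Ioc (0:ℝ) 1,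
      ENNReal.ofReal ((1 / Real.sqrt u - 1 / Real.sqrt (u + 1)) *
        (1 / Real.sqrt (u + 1) + Real.sqrt t)))
      ≤ ENNReal.ofReal ((1 + Real.sqrt t) * 2) := by
    have h1 : (∫⁻ u in Set.Ioc (0:ℝ) 1,
        ENNReal.ofReal ((1 / Real.sqrt u - 1 / Real.sqrt (u + 1)) *
          (1 / Real.sqrt (u + 1) + Real.sqrt t)))
        ≤ ∫⁻ u in Set.Ioc (0:ℝ) 1, ENNReal.ofReal ((1 + Real.sqrt t) * u ^ (-(1/2) : ℝ)) := by
      refine setLIntegral_mono (by fun_prop) fun u hu => ?_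
      exact ENNReal.ofReal_le_ofReal (ptA t u ht hu)
    refine h1.trans (le_of_eq ?_)
    have hi : IntegrableOn (fun u : ℝ => u ^ (-(1/2) : ℝ)) (Set.Ioc 0 1) :=
      (intervalIntegral.intervalIntegrable_rpow' (by norm_num)).1
    have hi' : IntegrableOn (fun u : ℝ => (1 + Real.sqrt t) * u ^ (-(1/2) : ℝ)) (Set.Ioc 0 1) :=
      hi.const_mul _
    rw [← MeasureTheory.ofReal_integral_eq_lintegral_ofReal hi'
      ((ae_restrict_iff' measurableSet_Ioc).2 (Filter.Eventually.of_forall fun u hu => by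
        have : (0:ℝ) < u := hu.1
        positivity))]
    congr 1
    rw [integral_const_mul]
    congr 1
    rw [← intervalIntegral.integral_of_le zero_le_one,
      integral_rpow (Or.inl (by norm_num))]
    norm_num
  have hB : (∫⁻ u in Set.Ioi (1:ℝ),
      ENNReal.ofReal ((1 / Real.sqrt u - 1 / Real.sqrt (u + 1)) *
        (1 / Real.sqrt (u + 1) + Real.sqrt t)))
      ≤ ENNReal.ofReal ((1 + Real.sqrt t) / 2 * 2) := by
    have h1 : (∫⁻ u in Set.Ioi (1:ℝ),
        ENNReal.ofReal ((1 / Real.sqrt u - 1 / Real.sqrt (u + 1)) *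
          (1 / Real.sqrt (u + 1) + Real.sqrt t)))
        ≤ ∫⁻ u in Set.Ioi (1:ℝ), ENNReal.ofReal ((1 + Real.sqrt t) / 2 * u ^ (-(3/2) : ℝ)) := by
      refine setLIntegral_mono (by fun_prop) fun u hu => ?_
      exact ENNReal.ofReal_le_ofReal (ptB t u ht hu)
    refine h1.trans (le_of_eq ?_)
    have hi : IntegrableOn (fun u : ℝ => u ^ (-(3/2) : ℝ)) (Set.Ioi 1) :=
      integrableOn_Ioi_rpow_of_lt (by norm_num) one_pos
    have hi' : IntegrableOn (fun u : ℝ => (1 + Real.sqrt t) / 2 * u ^ (-(3/2) : ℝ)) (Set.Ioi 1) :=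
      hi.const_mul _
    rw [← MeasureTheory.ofReal_integral_eq_lintegral_ofReal hi'
      ((ae_restrict_iff' measurableSet_Ioi).2 (Filter.Eventually.of_forall fun u hu => by
        have : (0:ℝ) < u := lt_trans one_pos hu
        positivity))]
    congr 1
    rw [integral_const_mul, integral_Ioi_rpow_of_lt (by norm_num) one_pos]
    norm_num
  calc _ ≤ ENNReal.ofReal ((1 + Real.sqrt t) * 2) + ENNReal.ofReal ((1 + Real.sqrt t) / 2 * 2) :=
        add_le_add hA hB
    _ = ENNReal.ofReal (3 * (1 + Real.sqrt t)) := by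
        rw [← ENNReal.ofReal_add (by positivity) (by positivity)]
        ring_nf

theorem stmt_13 :
    (∀ t : ℝ, 0 < t →
      (∫⁻ s in Set.Ioi t,
          ENNReal.ofReal ((1 / Real.sqrt (s - t) - 1 / Real.sqrt s) *
            ((1 + Real.sqrt s) / Real.sqrt s))) =
        (∫⁻ u in Set.Ioi (0 : ℝ),
          ENNReal.ofReal ((1 / Real.sqrt u - 1 / Real.sqrt (u + 1)) *
            (1 / Real.sqrt (u + 1) + Real.sqrt t))) ∧
      (∫⁻ s in Set.Ioi t,
          ENNReal.ofReal ((1 / Real.sqrt (s - t) - 1 / Real.sqrt s) *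
            ((1 + Real.sqrt s) / Real.sqrt s))) < ⊤) ∧
    ∃ C : ℝ, 0 < C ∧ ∀ t : ℝ, 0 < t →
      (∫⁻ s in Set.Ioi t,
          ENNReal.ofReal ((1 / Real.sqrt (s - t) - 1 / Real.sqrt s) *
            ((1 + Real.sqrt s) / Real.sqrt s))) ≤
        ENNReal.ofReal (C * (1 + Real.sqrt t)) := by
  constructor
  · intro t ht
    refine ⟨cov t ht, ?_⟩
    rw [cov t ht]
    exact lt_of_le_of_lt (boundK t ht) ENNReal.ofReal_lt_top
  · refine ⟨3, by norm_num, fun t ht => ?_⟩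
    rw [cov t ht]
    exact boundK t ht
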